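/- In the HINT-T routing step: if k(s,d) = k > 1 and d is not in the Tx-k group of s, then there exists a neighbor n of s in its Tx-k group with k(n,d) ≤ k − 1; hence the minimizing relay r* satisfies k(r*,d) < k(s,d). -/

import Mathlib

/-- `kval M T a b` is the smallest `k ≥ 1` such that some level-k set
`S_{ik} = {(i−1)M^k+1, …, iM^k}` contains both `a` and `b`. -/
noncomputable def kval (M T a b : ℕ) : ℕ :=
  sInf {k | 1 ≤ k ∧ ∃ i, 1 ≤ i ∧ i ≤ M ^ (T - k) ∧
    ((i - 1) * M ^ k + 1 ≤ a ∧ a ≤ i * M ^ k) ∧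
    ((i - 1) * M ^ k + 1 ≤ b ∧ b ≤ i * M ^ k)}

lemma kval_le_of_mem (M T a b k i : ℕ) (hk : 1 ≤ k) (hi1 : 1 ≤ i)
    (hi2 : i ≤ M ^ (T - k))
    (ha1 : (i - 1) * M ^ k + 1 ≤ a) (ha2 : a ≤ i * M ^ k)
    (hb1 : (i - 1) * M ^ k + 1 ≤ b) (hb2 : b ≤ i * M ^ k) :
    kval M T a b ≤ k :=
  Nat.sInf_le ⟨hk, i, hi1, hi2, ⟨ha1, ha2⟩, ⟨hb1, hb2⟩⟩

lemma interval_uniq (Mk a i i' : ℕ)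
    (h1 : (i - 1) * Mk + 1 ≤ a) (h2 : a ≤ i * Mk)
    (h1' : (i' - 1) * Mk + 1 ≤ a) (h2' : a ≤ i' * Mk) : i = i' := by
  by_contra h
  rcases Nat.lt_or_ge i i' with hlt | hge
  · have h3 : i ≤ i' - 1 := by omega
    have := Nat.mul_le_mul_right Mk h3
    omega
  · have h3 : i' ≤ i - 1 := by omega
    have := Nat.mul_le_mul_right Mk h3
    omega

/-- HINT-T routing step: if `k(s,d) = k > 1` and `d` is not in the Tx-k group
of `s` (the group `{(i−1)M^k + j + t·M^{k−1} : 0 ≤ t ≤ M−1}` containing `s`),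
then some neighbor `n` of `s` in that group has `k(n,d) ≤ k − 1`; hence the
minimizing relay `r*` satisfies `k(r*,d) < k(s,d)`. -/
theorem hintT_routing_step (M T s d k i j : ℕ) (hM : 2 ≤ M)
    (hd : d ∈ Finset.Icc 1 (M ^ T))
    (hk : kval M T s d = k) (hk1 : 1 < k) (hkT : k ≤ T)
    (hi : 1 ≤ i ∧ i ≤ M ^ (T - k)) (hj : 1 ≤ j ∧ j ≤ M ^ (k - 1))
    (hsG : ∃ t < M, s = (i - 1) * M ^ k + j + t * M ^ (k - 1))
    (hdG : ¬ ∃ t < M, d = (i - 1) * M ^ k + j + t * M ^ (k - 1)) :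
    ∃ n, n ≠ s ∧ (∃ t < M, n = (i - 1) * M ^ k + j + t * M ^ (k - 1)) ∧
      kval M T n d ≤ k - 1 := by
  obtain ⟨t, htM, hs⟩ := hsG
  obtain ⟨hi1, hi2⟩ := hi
  obtain ⟨hj1, hj2⟩ := hj
  have hMpos : 0 < M := by omega
  have hMm : 0 < M ^ (k - 1) := Nat.pow_pos hMpos
  have hpow : M ^ k = M ^ (k - 1) * M := by
    rw [← pow_succ, Nat.sub_add_cancel (by omega : 1 ≤ k)]
  have hsplit : i * M ^ k = (i - 1) * M ^ k + M ^ k := by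
    calc i * M ^ k = ((i - 1) + 1) * M ^ k := by rw [Nat.sub_add_cancel hi1]
    _ = (i - 1) * M ^ k + M ^ k := by ring
  -- the set defining kval s d is nonempty (since kval = k ≠ 0)
  have hne : kval M T s d ≠ 0 := by rw [hk]; omega
  have hmem := Nat.sInf_mem (Nat.nonempty_of_pos_sInf
    (show 0 < kval M T s d by omega))
  rw [show (sInf {k | 1 ≤ k ∧ ∃ i, 1 ≤ i ∧ i ≤ M ^ (T - k) ∧
    ((i - 1) * M ^ k + 1 ≤ s ∧ s ≤ i * M ^ k) ∧
    ((i - 1) * M ^ k + 1 ≤ d ∧ d ≤ i * M ^ k)}) = kval M T s d from rfl, hk] at hmem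
  obtain ⟨-, i₀, hi₀1, hi₀2, ⟨hs1, hs2⟩, ⟨hd1, hd2⟩⟩ := hmem
  -- s lies in the level-k block with index i, so i₀ = i
  have hs1' : (i - 1) * M ^ k + 1 ≤ s := by omega
  have hs2' : s ≤ i * M ^ k := by
    have ht1 : (t + 1) * M ^ (k - 1) ≤ M * M ^ (k - 1) :=
      Nat.mul_le_mul_right (M ^ (k - 1)) (show t + 1 ≤ M by omega)
    rw [Nat.add_mul, one_mul] at ht1
    have h2 : M * M ^ (k - 1) = M ^ k := by rw [hpow]; ring
    omega
  have hii : i = i₀ := interval_uniq (M ^ k) s i i₀ hs1' hs2' hs1 hs2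
  subst hii
  -- decompose d
  obtain ⟨r, hrd⟩ : ∃ r, d = (i - 1) * M ^ k + r :=
    ⟨d - (i - 1) * M ^ k, by
      have h := Nat.add_sub_cancel' (show (i - 1) * M ^ k ≤ d by omega)
      omega⟩
  have hr1 : 1 ≤ r := by omega
  have hr2 : r ≤ M ^ k := by omega
  obtain ⟨t', j', htM', hj'1, hj'2, hrdec⟩ :
      ∃ t' j', t' < M ∧ 1 ≤ j' ∧ j' ≤ M ^ (k - 1) ∧ r = j' + t' * M ^ (k - 1) := by
    refine ⟨(r - 1) / M ^ (k - 1), (r - 1) % M ^ (k - 1) + 1, ?_,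
      Nat.succ_le_succ (Nat.zero_le _), Nat.succ_le_of_lt (Nat.mod_lt _ hMm), ?_⟩
    · rw [Nat.div_lt_iff_lt_mul hMm]
      calc r - 1 < M ^ k := by omega
      _ = M * M ^ (k - 1) := by rw [hpow]; ring
    · have h := Nat.div_add_mod (r - 1) (M ^ (k - 1))
      rw [mul_comm] at h
      generalize (r - 1) / M ^ (k - 1) * M ^ (k - 1) = A at h ⊢
      generalize (r - 1) % M ^ (k - 1) = B at h ⊢
      omega
  have hdecomp : d = (i - 1) * M ^ k + j' + t' * M ^ (k - 1) := by omega
  -- j' ≠ j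
  have hjj : j' ≠ j := by
    intro h
    exact hdG ⟨t', htM', by rw [← h]; omega⟩
  -- arithmetic for level-(k-1) membership with index (i-1)*M + u + 1, u < M
  have hkey : ∀ u < M, ((i - 1) * M + u + 1 - 1) * M ^ (k - 1)
      = (i - 1) * M ^ k + u * M ^ (k - 1) := by
    intro u _
    have h3 : (i - 1) * M + u + 1 - 1 = (i - 1) * M + u := by omega
    rw [h3, Nat.add_mul, hpow]
    ring
  have hib : ∀ u < M, (i - 1) * M + u + 1 ≤ M ^ (T - (k - 1)) := by
    intro u hu
    have hTk : T - (k - 1) = (T - k) + 1 := by omega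
    rw [hTk, pow_succ]
    have h1 : (i - 1) * M ≤ (M ^ (T - k) - 1) * M :=
      Nat.mul_le_mul_right M (show i - 1 ≤ M ^ (T - k) - 1 by omega)
    have h2 : (M ^ (T - k) - 1) * M + M = M ^ (T - k) * M := by
      have hp : 1 ≤ M ^ (T - k) := Nat.one_le_pow _ _ hMpos
      calc (M ^ (T - k) - 1) * M + M = ((M ^ (T - k) - 1) + 1) * M := by ring
      _ = M ^ (T - k) * M := by rw [Nat.sub_add_cancel hp]
    omega
  have hmemlvl : ∀ u < M, ∀ x, (i - 1) * M ^ k + u * M ^ (k - 1) + 1 ≤ x →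
      x ≤ (i - 1) * M ^ k + u * M ^ (k - 1) + M ^ (k - 1) →
      (((i - 1) * M + u + 1 - 1) * M ^ (k - 1) + 1 ≤ x ∧
        x ≤ ((i - 1) * M + u + 1) * M ^ (k - 1)) := by
    intro u hu x hx1 hx2
    constructor
    · rw [hkey u hu]; omega
    · have h4 : ((i - 1) * M + u + 1) * M ^ (k - 1)
          = ((i - 1) * M + u + 1 - 1) * M ^ (k - 1) + M ^ (k - 1) := by
        have h3 : (i - 1) * M + u + 1 - 1 = (i - 1) * M + u := by omega
        rw [h3]; ring
      rw [h4, hkey u hu]; omega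
  -- t' ≠ t : otherwise s,d share a level-(k-1) set, contradicting kval = k
  have htt : t' ≠ t := by
    intro h
    have hprod : t' * M ^ (k - 1) = t * M ^ (k - 1) := by rw [h]
    have hmem_s := hmemlvl t htM s (by omega) (by omega)
    have hmem_d := hmemlvl t htM d (by omega) (by omega)
    have hle : kval M T s d ≤ k - 1 :=
      kval_le_of_mem M T s d (k - 1) ((i - 1) * M + t + 1) (by omega)
        (by omega) (hib t htM) hmem_s.1 hmem_s.2 hmem_d.1 hmem_d.2
    omega
  -- the neighbor
  refine ⟨(i - 1) * M ^ k + j + t' * M ^ (k - 1), ?_, ⟨t', htM', rfl⟩, ?_⟩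
  · intro h
    rw [hs] at h
    have heq : t' * M ^ (k - 1) = t * M ^ (k - 1) := by omega
    exact htt (Nat.eq_of_mul_eq_mul_right hMm heq)
  · have hmem_n := hmemlvl t' htM' ((i - 1) * M ^ k + j + t' * M ^ (k - 1))
      (by omega) (by omega)
    have hmem_d := hmemlvl t' htM' d (by omega) (by omega)
    exact kval_le_of_mem M T _ d (k - 1) ((i - 1) * M + t' + 1) (by omega)
      (by omega) (hib t' htM') hmem_n.1 hmem_n.2 hmem_d.1 hmem_d.2
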